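/- arXiv:1905.04346 — 3 statements merged into one kernel-verified Lean document; each statement's English description precedes it below -/
import Mathlib

section
/- Let f be L-smooth with global minimum f* and satisfy the P-L condition with modulus μ. Let g be any vector, γ ∈ (0, 1/L), and x⁺ = x - γg. Then f(x⁺) - f* ≤ (1 - ν)(f(x) - f*) + (γ(2 - Lγ)/2)‖g - ∇f(x)‖², where ν = (1/2)γμ(1 - Lγ). -/
open RealInnerProductSpace

lemma descent_lemma {m : ℕ} (f : EuclideanSpace ℝ (Fin m) → ℝ) (L : ℝ)
    (hdiff : Differentiable ℝ f)
    (hsmooth : ∀ x y, ‖gradient f x - gradient f y‖ ≤ L * ‖x - y‖)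
    (x v : EuclideanSpace ℝ (Fin m)) :
    f (x + v) ≤ f x + ⟪gradient f x, v⟫ + L / 2 * ‖v‖ ^ 2 := by
  set ψ : ℝ → ℝ := fun t =>
    f (x + t • v) - t * ⟪gradient f x, v⟫ - L / 2 * t ^ 2 * ‖v‖ ^ 2 with hψdef
  have hline : ∀ t : ℝ, HasDerivAt (fun s : ℝ => x + s • v) v t := by
    intro t
    simpa using ((hasDerivAt_id t).smul_const v).const_add x
  have hφ : ∀ t : ℝ, HasDerivAt (fun s : ℝ => f (x + s • v))
      ⟪gradient f (x + t • v), v⟫ t := by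
    intro t
    have hg : HasGradientAt f (gradient f (x + t • v)) (x + t • v) :=
      (hdiff (x + t • v)).hasGradientAt
    have hf' : HasFDerivAt f (InnerProductSpace.toDual ℝ _ (gradient f (x + t • v)))
        (x + t • v) := hg
    have := hf'.comp_hasDerivAt t (hline t)
    simpa [Function.comp_def] using this
  have hψ : ∀ t : ℝ, HasDerivAt ψ
      (⟪gradient f (x + t • v), v⟫ - ⟪gradient f x, v⟫ - L / 2 * (2 * t) * ‖v‖ ^ 2) t := by
    intro t
    have h1 : HasDerivAt (fun s : ℝ => s * ⟪gradient f x, v⟫) ⟪gradient f x, v⟫ t := by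
      simpa using (hasDerivAt_id t).mul_const ⟪gradient f x, v⟫
    have h2 : HasDerivAt (fun s : ℝ => L / 2 * s ^ 2 * ‖v‖ ^ 2)
        (L / 2 * (2 * t) * ‖v‖ ^ 2) t := by
      have := ((hasDerivAt_pow 2 t).const_mul (L / 2)).mul_const (‖v‖ ^ 2)
      simpa [mul_comm, mul_assoc, mul_left_comm] using this
    exact ((hφ t).sub h1).sub h2
  have hanti : AntitoneOn ψ (Set.Icc (0 : ℝ) 1) := by
    apply antitoneOn_of_deriv_nonpos (convex_Icc 0 1)
    · exact fun t _ => ((hψ t).continuousAt).continuousWithinAt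
    · exact fun t _ => ((hψ t).differentiableAt).differentiableWithinAt
    · intro t ht
      rw [interior_Icc] at ht
      rw [(hψ t).deriv]
      have hib : ⟪gradient f (x + t • v) - gradient f x, v⟫ ≤
          ‖gradient f (x + t • v) - gradient f x‖ * ‖v‖ :=
        real_inner_le_norm _ _
      have hs : ‖gradient f (x + t • v) - gradient f x‖ ≤ L * ‖t • v‖ := by
        simpa using hsmooth (x + t • v) x
      have ht0 : (0 : ℝ) ≤ t := ht.1.le
      have : ‖t • v‖ = t * ‖v‖ := by
        rw [norm_smul, Real.norm_eq_abs, abs_of_nonneg ht0]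
      rw [inner_sub_left] at hib
      rw [this] at hs
      nlinarith [norm_nonneg v, mul_le_mul_of_nonneg_right hs (norm_nonneg v),
        sq_nonneg ‖v‖]
  have := hanti (Set.left_mem_Icc.2 zero_le_one) (Set.right_mem_Icc.2 zero_le_one) zero_le_one
  simp only [hψdef] at this
  simp only [zero_smul, add_zero, one_smul, zero_mul, sub_zero, zero_pow, one_pow,
    mul_zero, mul_one, ne_eq, OfNat.ofNat_ne_zero, not_false_eq_true] at this
  linarith

/-- One-step progress inequality for a gradient step with an inexact gradient `g`,
under `L`-smoothness and the P-L condition. -/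
theorem one_step_PL_progress {m : ℕ} (f : EuclideanSpace ℝ (Fin m) → ℝ)
    (L μ fstar : ℝ) (hμ : 0 < μ) (hdiff : Differentiable ℝ f)
    (hsmooth : ∀ x y, ‖gradient f x - gradient f y‖ ≤ L * ‖x - y‖)
    (hmin : ∀ x, fstar ≤ f x)
    (hPL : ∀ x, μ * (f x - fstar) ≤ (1 / 2) * ‖gradient f x‖ ^ 2)
    (γ : ℝ) (hγ : 0 < γ) (hγL : γ < 1 / L)
    (x g : EuclideanSpace ℝ (Fin m)) :
    f (x - γ • g) - fstar ≤
      (1 - (1 / 2) * γ * μ * (1 - L * γ)) * (f x - fstar)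
        + γ * (2 - L * γ) / 2 * ‖g - gradient f x‖ ^ 2 := by
  have hL : 0 < L := one_div_pos.mp (hγ.trans hγL)
  have hLγ1 : L * γ < 1 := by
    have := (lt_div_iff₀ hL).mp hγL
    linarith
  set G := gradient f x with hG
  set E := g - G with hE
  have hgGE : g = G + E := by simp [hE]
  have hdes := descent_lemma f L hdiff hsmooth x (-(γ • g))
  have heq : x + -(γ • g) = x - γ • g := by abel
  rw [heq] at hdes
  have hin : ⟪G, -(γ • g)⟫ = -(γ * (‖G‖ ^ 2 + ⟪G, E⟫)) := by
    rw [inner_neg_right, real_inner_smul_right, hgGE, inner_add_right,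
      real_inner_self_eq_norm_sq]
  have hnrm : ‖-(γ • g)‖ ^ 2 = γ ^ 2 * (‖G‖ ^ 2 + 2 * ⟪G, E⟫ + ‖E‖ ^ 2) := by
    rw [norm_neg, norm_smul, Real.norm_eq_abs, mul_pow, sq_abs, hgGE, norm_add_sq_real]
  rw [hin, hnrm] at hdes
  have h3 : -(‖G‖ * ‖E‖) ≤ ⟪G, E⟫ := (abs_le.mp (abs_real_inner_le_norm G E)).1
  have h4 : 0 ≤ ⟪G, E⟫ + (‖G‖ ^ 2 + ‖E‖ ^ 2) / 2 := by nlinarith [sq_nonneg (‖G‖ - ‖E‖)]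
  have hF : 0 ≤ f x - fstar := by linarith [hmin x]
  have hPLx := hPL x
  rw [← hG] at hPLx
  have hne : 0 ≤ 1 - L * γ := by linarith
  nlinarith [mul_nonneg (mul_nonneg hγ.le hne) h4,
    mul_nonneg hγ.le (by linarith : (0:ℝ) ≤ 1 / 2 * ‖G‖ ^ 2 - μ * (f x - fstar)),
    mul_nonneg (mul_nonneg (mul_nonneg hγ.le hμ.le)
      (by nlinarith : (0:ℝ) ≤ 1 + L * γ)) hF,
    mul_nonneg (mul_nonneg hγ.le hne) (sq_nonneg ‖E‖)]
end

section
/- Let f : ℝ^m → ℝ be L-smooth, 0 < γ < 1/L, x any point, g any vector, and x⁺ = x - γg. Then f(x⁺) ≤ f(x) + (γ/4)(Lγ - 1)‖∇f(x)‖² + (γ/2)(2 - Lγ)‖g - ∇f(x)‖². -/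
open RealInnerProductSpace

lemma descent_lemma_aux {m : ℕ} (f : EuclideanSpace ℝ (Fin m) → ℝ) (L : ℝ) (hL : 0 ≤ L)
    (hdiff : Differentiable ℝ f)
    (hsmooth : ∀ x y, ‖gradient f x - gradient f y‖ ≤ L * ‖x - y‖)
    (x v : EuclideanSpace ℝ (Fin m)) :
    f (x + v) ≤ f x + ⟪gradient f x, v⟫ + L / 2 * ‖v‖ ^ 2 := by
  set φ : ℝ → ℝ := fun t => f (x + t • v) - t * ⟪gradient f x, v⟫ - L / 2 * t ^ 2 * ‖v‖ ^ 2
    with hφ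
  have hline : ∀ t : ℝ, HasDerivAt (fun t : ℝ => x + t • v) v t := fun t =>
    ((hasDerivAt_id t).smul_const v).const_add x |>.congr_deriv (one_smul ℝ v)
  have hfd : ∀ t : ℝ, HasDerivAt (fun t => f (x + t • v))
      ⟪gradient f (x + t • v), v⟫ t := by
    intro t
    have h1 := (hdiff (x + t • v)).hasGradientAt.hasFDerivAt.comp_hasDerivAt t (hline t)
    simpa [Function.comp_def] using h1
  have hφ' : ∀ t : ℝ, HasDerivAt φ
      (⟪gradient f (x + t • v), v⟫ - ⟪gradient f x, v⟫ - L / 2 * (2 * t) * ‖v‖ ^ 2) t := by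
    intro t
    have h2 : HasDerivAt (fun t : ℝ => t * ⟪gradient f x, v⟫) ⟪gradient f x, v⟫ t := by
      simpa using (hasDerivAt_id t).mul_const ⟪gradient f x, v⟫
    have h3 : HasDerivAt (fun t : ℝ => L / 2 * t ^ 2 * ‖v‖ ^ 2)
        (L / 2 * (2 * t) * ‖v‖ ^ 2) t := by
      have := ((hasDerivAt_pow 2 t).const_mul (L / 2)).mul_const (‖v‖ ^ 2)
      simpa [mul_comm, mul_assoc, mul_left_comm] using this
    exact ((hfd t).sub h2).sub h3
  have hmono : φ 1 ≤ φ 0 := by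
    have hanti : AntitoneOn φ (Set.Icc 0 1) := by
      apply antitoneOn_of_deriv_nonpos (convex_Icc 0 1)
      · exact (Differentiable.continuous fun t => (hφ' t).differentiableAt).continuousOn
      · intro t ht
        exact (hφ' t).differentiableAt.differentiableWithinAt
      · intro t ht
        rw [interior_Icc] at ht
        rw [(hφ' t).deriv]
        have hip : ⟪gradient f (x + t • v) - gradient f x, v⟫ ≤ L * t * ‖v‖ ^ 2 := by
          calc ⟪gradient f (x + t • v) - gradient f x, v⟫
              ≤ ‖gradient f (x + t • v) - gradient f x‖ * ‖v‖ := real_inner_le_norm _ _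
            _ ≤ (L * ‖(x + t • v) - x‖) * ‖v‖ := by
                gcongr; exact hsmooth _ _
            _ = L * t * ‖v‖ ^ 2 := by
                rw [add_sub_cancel_left, norm_smul, Real.norm_eq_abs,
                  abs_of_pos ht.1]; ring
        have := inner_sub_left (𝕜 := ℝ) (gradient f (x + t • v)) (gradient f x) v
        nlinarith [this]
    exact hanti (Set.mem_Icc.mpr ⟨le_refl 0, zero_le_one⟩)
      (Set.mem_Icc.mpr ⟨zero_le_one, le_refl 1⟩) zero_le_one
  simp only [hφ, one_smul, one_pow, zero_smul, add_zero, zero_pow, one_mul, mul_zero,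
    zero_mul, sub_zero, mul_one, ne_eq, OfNat.ofNat_ne_zero, not_false_eq_true] at hmono
  linarith

/-- Descent inequality for a gradient step with an inexact gradient `g`:
if `f` is `L`-smooth and `0 < γ < 1/L`, then
`f(x - γg) ≤ f(x) + (γ/4)(Lγ - 1)‖∇f(x)‖² + (γ/2)(2 - Lγ)‖g - ∇f(x)‖²`. -/
theorem inexact_descent_step {m : ℕ} (f : EuclideanSpace ℝ (Fin m) → ℝ) (L : ℝ)
    (hdiff : Differentiable ℝ f)
    (hsmooth : ∀ x y, ‖gradient f x - gradient f y‖ ≤ L * ‖x - y‖)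
    (γ : ℝ) (hγ : 0 < γ) (hγL : γ < 1 / L)
    (x g : EuclideanSpace ℝ (Fin m)) :
    f (x - γ • g) ≤ f x + γ / 4 * (L * γ - 1) * ‖gradient f x‖ ^ 2
      + γ / 2 * (2 - L * γ) * ‖g - gradient f x‖ ^ 2 := by
  have hL : 0 < L := by
    by_contra h
    push_neg at h
    have : 1 / L ≤ 0 := one_div_nonpos.mpr h
    linarith
  have hLγ : L * γ < 1 := by
    rw [lt_div_iff₀ hL] at hγL; linarith [hγL]
  have hd := descent_lemma_aux f L hL.le hdiff hsmooth x (-(γ • g))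
  rw [show x + -(γ • g) = x - γ • g by abel] at hd
  set a := gradient f x
  set e := g - a with he
  have hg : g = a + e := by rw [he]; abel
  have hnorm : ‖(-(γ • g))‖ ^ 2 = γ ^ 2 * ‖g‖ ^ 2 := by
    rw [norm_neg, norm_smul, Real.norm_eq_abs, abs_of_pos hγ, mul_pow]
  have hinner : ⟪a, -(γ • g)⟫ = -γ * (⟪a, a⟫ + ⟪a, e⟫) := by
    rw [hg, inner_neg_right, inner_smul_right, inner_add_right]; ring
  have hgn : ‖g‖ ^ 2 = ‖a‖ ^ 2 + 2 * ⟪a, e⟫ + ‖e‖ ^ 2 := by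
    rw [hg, @norm_add_sq_real]
  have haa : ⟪a, a⟫ = ‖a‖ ^ 2 := real_inner_self_eq_norm_sq a
  have hae : |⟪a, e⟫| ≤ ‖a‖ * ‖e‖ := abs_real_inner_le_norm a e
  have hkey : (‖a‖ / 2 - ‖e‖) ^ 2 ≥ 0 := sq_nonneg _
  rw [hnorm, hinner, haa, hgn] at hd
  have habs := abs_le.mp hae
  nlinarith [hd, habs.1, habs.2, hkey, sq_nonneg (‖a‖ - ‖e‖), sq_nonneg γ,
    mul_pos hγ (sub_pos.mpr hLγ), sq_nonneg ‖e‖, sq_nonneg ‖a‖]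
end

section
/- Let f(x) = g(Ax) where g : ℝ^k → ℝ is differentiable and strongly convex with modulus μ > 0 and A is a k × m real matrix (possibly rank deficient). If f attains its global minimum f*, then f satisfies the Polyak-Lojasiewicz condition with some modulus μ' > 0, i.e., there exists μ' > 0 such that (1/2)‖∇f(x)‖² ≥ μ'(f(x) - f*) for all x. -/
open RealInnerProductSpace

set_option maxHeartbeats 1000000 in
/-- If `f(x) = g(Ax)` with `g` strongly convex (modulus `μ > 0`) and `A` a possibly
rank-deficient matrix, and `f` attains its global minimum `f*`, then `f` satisfies
the P-L condition with some modulus `μ' > 0`. -/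
theorem composition_strongly_convex_PL {k m : ℕ}
    (g : EuclideanSpace ℝ (Fin k) → ℝ) (μ : ℝ) (hμ : 0 < μ)
    (hgdiff : Differentiable ℝ g)
    (hsc : ∀ u v, g v ≥ g u + ⟪gradient g u, v - u⟫ + μ / 2 * ‖v - u‖ ^ 2)
    (A : Matrix (Fin k) (Fin m) ℝ)
    (f : EuclideanSpace ℝ (Fin m) → ℝ)
    (hfdef : ∀ x, f x = g (WithLp.toLp 2 (A.mulVec x)))
    (fstar : ℝ) (hmin : ∀ x, fstar ≤ f x) (hattain : ∃ x, f x = fstar) :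
    ∃ μ' > 0, ∀ x, μ' * (f x - fstar) ≤ (1 / 2) * ‖gradient f x‖ ^ 2 := by
  classical
  -- the linear map associated to `A`
  set L : EuclideanSpace ℝ (Fin m) →L[ℝ] EuclideanSpace ℝ (Fin k) :=
    LinearMap.toContinuousLinearMap
      { toFun := fun x => WithLp.toLp 2 (A.mulVec x)
        map_add' := fun x y => by simp [Matrix.mulVec_add]
        map_smul' := fun c x => by simp [Matrix.mulVec_smul] } with hL
  have hLapp : ∀ x, L x = WithLp.toLp 2 (A.mulVec x) := fun x => rfl
  clear_value L
  -- gradient chain rule : gradient f x = L† (gradient g (L x))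
  have hgrad : ∀ x, gradient f x = ContinuousLinearMap.adjoint L (gradient g (L x)) := by
    intro x
    have hg : HasGradientAt g (gradient g (L x)) (L x) :=
      (hgdiff (L x)).hasGradientAt
    have hfd : HasFDerivAt g (InnerProductSpace.toDual ℝ _ (gradient g (L x))) (L x) :=
      hg.hasFDerivAt
    have hcomp : HasFDerivAt f
        ((InnerProductSpace.toDual ℝ _ (gradient g (L x))).comp L) x := by
      have h1 : HasFDerivAt (fun y => g (L y))
          ((InnerProductSpace.toDual ℝ _ (gradient g (L x))).comp L) x :=
        hfd.comp x (L.hasFDerivAt)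
      refine h1.congr_of_eventuallyEq ?_
      filter_upwards with y
      rw [hfdef, hLapp]
    have heq : (InnerProductSpace.toDual ℝ _
          (ContinuousLinearMap.adjoint L (gradient g (L x))))
        = (InnerProductSpace.toDual ℝ _ (gradient g (L x))).comp L := by
      ext v
      simp [InnerProductSpace.toDual_apply_apply, ContinuousLinearMap.adjoint_inner_left]
    have h2 : HasGradientAt f (ContinuousLinearMap.adjoint L (gradient g (L x))) x := by
      rw [hasGradientAt_iff_hasFDerivAt, heq]; exact hcomp
    exact h2.gradient
  -- the range of `L`
  set S : Submodule ℝ (EuclideanSpace ℝ (Fin k)) := LinearMap.range L.toLinearMap with hS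
  -- adjoint restricted to S is injective, hence antilipschitz
  have hinj : LinearMap.ker ((ContinuousLinearMap.adjoint L).toLinearMap.comp S.subtype)
      = ⊥ := by
    rw [LinearMap.ker_eq_bot]
    intro s t hst
    have hs : ContinuousLinearMap.adjoint L (s : EuclideanSpace ℝ (Fin k))
        = ContinuousLinearMap.adjoint L (t : EuclideanSpace ℝ (Fin k)) := hst
    have hz : ∀ u, ⟪(s : EuclideanSpace ℝ (Fin k)) - t, L u⟫ = 0 := by
      intro u
      rw [← ContinuousLinearMap.adjoint_inner_left L, map_sub, hs, sub_self]
      simp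
    obtain ⟨u, hu⟩ := sub_mem s.2 t.2
    have h0 : ⟪(s : EuclideanSpace ℝ (Fin k)) - t,
        (s : EuclideanSpace ℝ (Fin k)) - t⟫ = (0 : ℝ) := by
      have h1 := hz u
      rwa [show L u = (s : EuclideanSpace ℝ (Fin k)) - t from hu] at h1
    exact Subtype.ext (sub_eq_zero.mp (inner_self_eq_zero.mp h0))
  obtain ⟨K, hK0, hKanti⟩ :=
    LinearMap.exists_antilipschitzWith
      ((ContinuousLinearMap.adjoint L).toLinearMap.comp S.subtype) hinj
  have hK0' : (0 : ℝ) < (K : ℝ) := hK0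
  refine ⟨μ / (K : ℝ) ^ 2, by positivity, fun x => ?_⟩
  set w : EuclideanSpace ℝ (Fin k) := gradient g (L x) with hw
  set p : EuclideanSpace ℝ (Fin k) := (S.orthogonalProjectionOnto w : EuclideanSpace ℝ (Fin k))
    with hp
  have hpS : p ∈ S := by rw [hp]; exact (S.orthogonalProjectionOnto w).2
  have hwp_orth : ∀ u ∈ S, ⟪w - p, u⟫ = (0 : ℝ) := by
    intro u hu
    rw [real_inner_comm]
    have h1 := Submodule.sub_starProjection_mem_orthogonal (K := S) w u hu
    rwa [Submodule.starProjection_apply, ← hp] at h1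
  -- strong convexity step: f x - fstar ≤ ‖p‖² / (2μ)
  have hstep : f x - fstar ≤ ‖p‖ ^ 2 / (2 * μ) := by
    obtain ⟨xs, hxs⟩ := hattain
    have hsc' := hsc (L x) (L xs)
    set s : EuclideanSpace ℝ (Fin k) := L xs - L x with hsdef
    have hsS : s ∈ S := ⟨xs - x, by simp [map_sub, hsdef]⟩
    have hws : ⟪w, s⟫ = ⟪s, p⟫ := by
      have h1 : ⟪w - p, s⟫ = (0 : ℝ) := hwp_orth s hsS
      have h2 : ⟪w - p, s⟫ = ⟪w, s⟫ - ⟪p, s⟫ := inner_sub_left _ _ _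
      have h3 : ⟪p, s⟫ = ⟪s, p⟫ := real_inner_comm _ _
      linarith
    have hquad : (0 : ℝ) ≤ μ / 2 * ‖s + μ⁻¹ • p‖ ^ 2 := by positivity
    have hexp : μ / 2 * ‖s + μ⁻¹ • p‖ ^ 2
        = μ / 2 * ‖s‖ ^ 2 + ⟪s, p⟫ + ‖p‖ ^ 2 / (2 * μ) := by
      rw [norm_add_sq_real, real_inner_smul_right, norm_smul]
      have : ‖μ⁻¹‖ = μ⁻¹ := by
        rw [Real.norm_eq_abs, abs_of_pos (inv_pos.mpr hμ)]
      rw [this]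
      field_simp
    have hgval : g (L xs) = fstar := by rw [hLapp, ← hfdef, hxs]
    have hgval2 : g (L x) = f x := by rw [hfdef, hLapp]
    rw [hgval, hgval2, ← hw, hws] at hsc'
    linarith [hexp ▸ hquad]
  -- ‖p‖ ≤ K * ‖gradient f x‖
  have hadjp : ContinuousLinearMap.adjoint L p = gradient f x := by
    rw [hgrad x, ← hw]
    have h0 : ContinuousLinearMap.adjoint L (w - p) = 0 := by
      have h1 : ∀ u, ⟪ContinuousLinearMap.adjoint L (w - p), u⟫ = (0 : ℝ) := by
        intro u
        rw [ContinuousLinearMap.adjoint_inner_left]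
        exact hwp_orth (L u) (LinearMap.mem_range_self _ u)
      exact inner_self_eq_zero.mp (h1 _)
    have h2 := map_sub (ContinuousLinearMap.adjoint L) w p
    rw [h0] at h2
    exact (sub_eq_zero.mp h2.symm).symm
  have hbound : ‖p‖ ≤ (K : ℝ) * ‖gradient f x‖ := by
    have h1 := hKanti.le_mul_dist (⟨p, hpS⟩ : S) 0
    rw [dist_zero_right, map_zero, dist_zero_right] at h1
    have h2 : ((ContinuousLinearMap.adjoint L).toLinearMap.comp S.subtype) (⟨p, hpS⟩ : S)
        = gradient f x := by
      simp only [LinearMap.comp_apply, Submodule.subtype_apply,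
        ContinuousLinearMap.coe_coe]
      exact hadjp
    rw [h2] at h1
    exact h1
  have hsq : ‖p‖ ^ 2 ≤ (K : ℝ) ^ 2 * ‖gradient f x‖ ^ 2 := by
    have h1 := mul_self_le_mul_self (norm_nonneg p) hbound
    calc ‖p‖ ^ 2 = ‖p‖ * ‖p‖ := sq ‖p‖
      _ ≤ ((K : ℝ) * ‖gradient f x‖) * ((K : ℝ) * ‖gradient f x‖) := h1
      _ = (K : ℝ) ^ 2 * ‖gradient f x‖ ^ 2 := by ring
  calc μ / (K : ℝ) ^ 2 * (f x - fstar)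
      ≤ μ / (K : ℝ) ^ 2 * (‖p‖ ^ 2 / (2 * μ)) :=
        mul_le_mul_of_nonneg_left hstep (by positivity)
    _ = ‖p‖ ^ 2 / (2 * (K : ℝ) ^ 2) := by field_simp
    _ ≤ ((K : ℝ) ^ 2 * ‖gradient f x‖ ^ 2) / (2 * (K : ℝ) ^ 2) := by
        apply div_le_div_of_nonneg_right hsq (by positivity)
    _ = (1 / 2) * ‖gradient f x‖ ^ 2 := by field_simp
end
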